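/- (Telescope Lemma) Let X₀, …, X_m be topological disks (open simply connected domains in ℂ), and for k = 0, …, n−1 let φ_k : X_k → φ_k(X_k) be a proper holomorphic branched covering of degree d_k with φ_k(X_k) ⊃ X_{k+1}. Let Φ = φ_{n−1} ∘ ⋯ ∘ φ₀ restricted to a connected component P of its domain of definition. Then Φ : P → X_n is a branched covering of degree at most d₀·d₁⋯d_{n−1}. -/

import Mathlib

open Set

/-- A topological disk: a nonempty open simply connected domain in `ℂ`. -/
def IsTopDisk (U : Set ℂ) : Prop :=
  IsOpen U ∧ U.Nonempty ∧ IsPreconnected U ∧ SimplyConnectedSpace U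

/-- `f : U → V` is a (proper holomorphic) branched covering of degree at most `d`:
`f` is holomorphic on `U`, maps `U` onto `V`, is proper over `V`, and every fiber
over `V` has at most `d` points. -/
def IsBranchedCoveringDegLE (f : ℂ → ℂ) (U V : Set ℂ) (d : ℕ) : Prop :=
  DifferentiableOn ℂ f U ∧ MapsTo f U V ∧ SurjOn f U V ∧
  (∀ K, K ⊆ V → IsCompact K → IsCompact (U ∩ f ⁻¹' K)) ∧
  (∀ v ∈ V, (U ∩ f ⁻¹' {v}).Finite ∧ (U ∩ f ⁻¹' {v}).ncard ≤ d)

/-- The composition `φ_{n-1} ∘ ⋯ ∘ φ_0`. -/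
def iterComp (φ : ℕ → ℂ → ℂ) : ℕ → ℂ → ℂ
  | 0 => id
  | n + 1 => φ n ∘ iterComp φ n

namespace TelescopeAux

lemma iterComp_succ (φ : ℕ → ℂ → ℂ) (n : ℕ) :
    iterComp φ (n + 1) = φ n ∘ iterComp φ n := rfl

lemma iterComp_zero (φ : ℕ → ℂ → ℂ) : iterComp φ 0 = id := rfl

variable (X : ℕ → Set ℂ) (φ : ℕ → ℂ → ℂ)

def dom (n : ℕ) : Set ℂ := {z | z ∈ X 0 ∧ ∀ k < n, iterComp φ (k + 1) z ∈ X (k + 1)}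

lemma dom_zero : dom X φ 0 = X 0 := by
  ext z; simp [dom]

lemma dom_succ (n : ℕ) :
    dom X φ (n + 1) = dom X φ n ∩ iterComp φ (n + 1) ⁻¹' X (n + 1) := by
  ext z
  simp only [dom, mem_setOf_eq, mem_inter_iff, mem_preimage, Nat.lt_succ_iff_lt_or_eq]
  constructor
  · rintro ⟨h0, h⟩
    exact ⟨⟨h0, fun k hk => h k (Or.inl hk)⟩, h n (Or.inr rfl)⟩
  · rintro ⟨⟨h0, h⟩, hn⟩
    refine ⟨h0, fun k hk => ?_⟩
    rcases hk with hk | rfl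
    · exact h k hk
    · exact hn

lemma dom_mono {m n : ℕ} (h : m ≤ n) : dom X φ n ⊆ dom X φ m :=
  fun z hz => ⟨hz.1, fun k hk => hz.2 k (hk.trans_le h)⟩

lemma mapsTo_dom (n : ℕ) : MapsTo (iterComp φ n) (dom X φ n) (X n) := by
  intro z hz
  cases n with
  | zero => exact hz.1
  | succ m => exact hz.2 m (Nat.lt_succ_self m)

lemma diffOn (n : ℕ) (hφ : ∀ k < n, DifferentiableOn ℂ (φ k) (X k)) :
    DifferentiableOn ℂ (iterComp φ n) (dom X φ n) := by
  induction n with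
  | zero => exact differentiableOn_id
  | succ m ih =>
    have h1 : DifferentiableOn ℂ (iterComp φ m) (dom X φ (m + 1)) :=
      (ih fun k hk => hφ k (hk.trans (Nat.lt_succ_self m))).mono
        (dom_mono X φ (Nat.le_succ m))
    exact (hφ m (Nat.lt_succ_self m)).comp h1
      fun z hz => mapsTo_dom X φ m (dom_mono X φ (Nat.le_succ m) hz)

lemma dom_isOpen (n : ℕ) (hXo : ∀ k ≤ n, IsOpen (X k))
    (hφd : ∀ k < n, DifferentiableOn ℂ (φ k) (X k)) : IsOpen (dom X φ n) := by
  induction n with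
  | zero => rw [dom_zero]; exact hXo 0 le_rfl
  | succ m ih =>
    have hdm : IsOpen (dom X φ m) :=
      ih (fun k hk => hXo k (hk.trans (Nat.le_succ m)))
        (fun k hk => hφd k (hk.trans (Nat.lt_succ_self m)))
    have hc : ContinuousOn (iterComp φ (m + 1)) (dom X φ m) := by
      rw [iterComp_succ]
      exact (hφd m (Nat.lt_succ_self m)).continuousOn.comp
        ((diffOn X φ m fun k hk => hφd k (hk.trans (Nat.lt_succ_self m))).continuousOn)
        (mapsTo_dom X φ m)
    rw [dom_succ]
    exact hc.isOpen_inter_preimage hdm (hXo (m + 1) le_rfl)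

lemma preimage_succ (n : ℕ) (K : Set ℂ) (hK : K ⊆ X (n + 1)) :
    dom X φ (n + 1) ∩ iterComp φ (n + 1) ⁻¹' K
      = dom X φ n ∩ iterComp φ n ⁻¹' (X n ∩ φ n ⁻¹' K) := by
  ext z
  simp only [dom_succ, mem_inter_iff, mem_preimage, iterComp_succ, Function.comp_apply]
  constructor
  · rintro ⟨⟨hd, -⟩, hK'⟩
    exact ⟨hd, mapsTo_dom X φ n hd, hK'⟩
  · rintro ⟨hd, -, hK'⟩
    exact ⟨⟨hd, hK hK'⟩, hK'⟩

lemma proper (n : ℕ) (d : ℕ → ℕ)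
    (hφ : ∀ k < n, IsBranchedCoveringDegLE (φ k) (X k) (φ k '' X k) (d k))
    (hsub : ∀ k < n, X (k + 1) ⊆ φ k '' X k) :
    ∀ K ⊆ X n, IsCompact K → IsCompact (dom X φ n ∩ iterComp φ n ⁻¹' K) := by
  induction n with
  | zero =>
    intro K hK hKc
    rw [dom_zero]
    have : X 0 ∩ iterComp φ 0 ⁻¹' K = K := by
      rw [iterComp_zero, preimage_id]
      exact inter_eq_self_of_subset_right hK
    rwa [this]
  | succ m ih =>
    intro K hK hKc
    rw [preimage_succ X φ m K hK]
    refine ih (fun k hk => hφ k (hk.trans (Nat.lt_succ_self m)))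
      (fun k hk => hsub k (hk.trans (Nat.lt_succ_self m)))
      (X m ∩ φ m ⁻¹' K) inter_subset_left ?_
    exact (hφ m (Nat.lt_succ_self m)).2.2.2.1 K (hK.trans (hsub m (Nat.lt_succ_self m))) hKc

lemma surjOn (n : ℕ) (d : ℕ → ℕ)
    (hφ : ∀ k < n, IsBranchedCoveringDegLE (φ k) (X k) (φ k '' X k) (d k))
    (hsub : ∀ k < n, X (k + 1) ⊆ φ k '' X k) :
    SurjOn (iterComp φ n) (dom X φ n) (X n) := by
  induction n with
  | zero =>
    intro v hv
    exact ⟨v, by rw [dom_zero]; exact hv, rfl⟩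
  | succ m ih =>
    intro v hv
    obtain ⟨w, hw, hwv⟩ := hsub m (Nat.lt_succ_self m) hv
    obtain ⟨z, hz, hzw⟩ := ih (fun k hk => hφ k (hk.trans (Nat.lt_succ_self m)))
      (fun k hk => hsub k (hk.trans (Nat.lt_succ_self m))) hw
    refine ⟨z, ?_, ?_⟩
    · rw [dom_succ]
      refine ⟨hz, ?_⟩
      show φ m (iterComp φ m z) ∈ X (m + 1)
      rw [hzw, hwv]
      exact hv
    · show φ m (iterComp φ m z) = v
      rw [hzw, hwv]

lemma card_biUnion_le {α β : Type*} {F : Set α} (hF : F.Finite) (g : α → Set β) (m : ℕ) :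
    (∀ w ∈ F, (g w).Finite ∧ (g w).ncard ≤ m) →
    (⋃ w ∈ F, g w).Finite ∧ (⋃ w ∈ F, g w).ncard ≤ F.ncard * m := by
  refine Set.Finite.induction_on
    (motive := fun F _ => (∀ w ∈ F, (g w).Finite ∧ (g w).ncard ≤ m) →
      (⋃ w ∈ F, g w).Finite ∧ (⋃ w ∈ F, g w).ncard ≤ F.ncard * m) F hF
    (fun _ => by simp) ?_
  intro a s ha hs ih h
  rw [biUnion_insert]
  obtain ⟨hf1, hc1⟩ := h a (mem_insert a s)
  obtain ⟨hf2, hc2⟩ := ih fun w hw => h w (mem_insert_of_mem a hw)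
  refine ⟨hf1.union hf2, ?_⟩
  calc (g a ∪ ⋃ w ∈ s, g w).ncard ≤ (g a).ncard + (⋃ w ∈ s, g w).ncard :=
        ncard_union_le _ _
    _ ≤ m + s.ncard * m := add_le_add hc1 hc2
    _ = (insert a s).ncard * m := by
        rw [ncard_insert_of_notMem ha hs]; ring

lemma fiber (n : ℕ) (d : ℕ → ℕ)
    (hφ : ∀ k < n, IsBranchedCoveringDegLE (φ k) (X k) (φ k '' X k) (d k))
    (hsub : ∀ k < n, X (k + 1) ⊆ φ k '' X k) :
    ∀ v ∈ X n, (dom X φ n ∩ iterComp φ n ⁻¹' {v}).Finite ∧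
      (dom X φ n ∩ iterComp φ n ⁻¹' {v}).ncard ≤ ∏ k ∈ Finset.range n, d k := by
  induction n with
  | zero =>
    intro v hv
    have : dom X φ 0 ∩ iterComp φ 0 ⁻¹' {v} = {v} := by
      rw [dom_zero, iterComp_zero, preimage_id]
      exact inter_eq_self_of_subset_right (singleton_subset_iff.mpr hv)
    rw [this]
    simp
  | succ m ih =>
    intro v hv
    have hKsub : ({v} : Set ℂ) ⊆ X (m + 1) := singleton_subset_iff.mpr hv
    rw [preimage_succ X φ m {v} hKsub]
    set F := X m ∩ φ m ⁻¹' {v} with hFdef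
    obtain ⟨hFfin, hFcard⟩ :=
      (hφ m (Nat.lt_succ_self m)).2.2.2.2 v (hsub m (Nat.lt_succ_self m) hv)
    have hrw : dom X φ m ∩ iterComp φ m ⁻¹' F
        = ⋃ w ∈ F, dom X φ m ∩ iterComp φ m ⁻¹' {w} := by
      ext z
      simp only [mem_inter_iff, mem_preimage, mem_iUnion, exists_prop, mem_singleton_iff]
      constructor
      · rintro ⟨hd, hF⟩; exact ⟨iterComp φ m z, hF, hd, rfl⟩
      · rintro ⟨w, hwF, hd, hw⟩; rw [hw]; exact ⟨hd, hwF⟩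
    rw [hrw]
    obtain ⟨h1, h2⟩ := card_biUnion_le hFfin _ (∏ k ∈ Finset.range m, d k)
      (fun w hw => ih (fun k hk => hφ k (hk.trans (Nat.lt_succ_self m)))
        (fun k hk => hsub k (hk.trans (Nat.lt_succ_self m))) w hw.1)
    refine ⟨h1, h2.trans ?_⟩
    rw [Finset.prod_range_succ]
    calc F.ncard * ∏ k ∈ Finset.range m, d k
        ≤ d m * ∏ k ∈ Finset.range m, d k := Nat.mul_le_mul_right _ hFcard
      _ = (∏ k ∈ Finset.range m, d k) * d m := Nat.mul_comm _ _

end TelescopeAux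

set_option maxHeartbeats 1000000 in
open TelescopeAux in
/-- **Telescope Lemma.** Let `X_0, …, X_n` be topological disks and
`φ_k : X_k → φ_k(X_k)` branched coverings of degree `d_k` with `φ_k(X_k) ⊇ X_{k+1}`.
Let `Φ = φ_{n-1} ∘ ⋯ ∘ φ_0` and let `P` be a connected component of its domain of
definition. Then `Φ : P → X_n` is a branched covering of degree at most `d_0 ⋯ d_{n-1}`. -/
theorem telescope (n : ℕ) (X : ℕ → Set ℂ) (φ : ℕ → ℂ → ℂ) (d : ℕ → ℕ)
    (hX : ∀ k ≤ n, IsTopDisk (X k))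
    (hφ : ∀ k < n, IsBranchedCoveringDegLE (φ k) (X k) (φ k '' X k) (d k))
    (hsub : ∀ k < n, X (k + 1) ⊆ φ k '' X k)
    (P : Set ℂ) (z₀ : ℂ)
    (hz₀ : z₀ ∈ X 0 ∧ ∀ k < n, iterComp φ (k + 1) z₀ ∈ X (k + 1))
    (hP : P = connectedComponentIn
      {z | z ∈ X 0 ∧ ∀ k < n, iterComp φ (k + 1) z ∈ X (k + 1)} z₀) :
    IsBranchedCoveringDegLE (iterComp φ n) P (X n) (∏ k ∈ Finset.range n, d k) := by
  obtain ⟨hz0X, hz0D⟩ := hz₀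
  have hz0mem : z₀ ∈ dom X φ n := ⟨hz0X, hz0D⟩
  have hPdef : P = connectedComponentIn (dom X φ n) z₀ := hP
  have hφd : ∀ k < n, DifferentiableOn ℂ (φ k) (X k) := fun k hk => (hφ k hk).1
  have hXo : ∀ k ≤ n, IsOpen (X k) := fun k hk => (hX k hk).1
  have hDo : IsOpen (dom X φ n) := dom_isOpen X φ n hXo hφd
  have hPsub : P ⊆ dom X φ n := hPdef ▸ connectedComponentIn_subset _ _
  have hPo : IsOpen P := hPdef ▸ hDo.connectedComponentIn
  have hz0P : z₀ ∈ P := hPdef ▸ mem_connectedComponentIn hz0mem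
  have hPconn : IsConnected P := hPdef ▸ (isConnected_connectedComponentIn_iff.mpr hz0mem)
  have hclos : ∀ y ∈ dom X φ n, y ∈ closure P → y ∈ P := by
    intro y hyD hyc
    have hUo : IsOpen (connectedComponentIn (dom X φ n) y) := hDo.connectedComponentIn
    have hyU : y ∈ connectedComponentIn (dom X φ n) y := mem_connectedComponentIn hyD
    obtain ⟨w, hw1, hw2⟩ := mem_closure_iff.mp hyc _ hUo hyU
    have h1 : connectedComponentIn (dom X φ n) y
        = connectedComponentIn (dom X φ n) w := connectedComponentIn_eq hw1
    have h2 : P = connectedComponentIn (dom X φ n) w := by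
      rw [hPdef]
      exact connectedComponentIn_eq (hPdef ▸ hw2)
    rw [← h2] at h1
    exact h1 ▸ hyU
  have hmapsP : MapsTo (iterComp φ n) P (X n) := fun z hz => mapsTo_dom X φ n (hPsub hz)
  have hdiffP : DifferentiableOn ℂ (iterComp φ n) P := (diffOn X φ n hφd).mono hPsub
  have hproperD := TelescopeAux.proper X φ n d hφ hsub
  have hproperP : ∀ K, K ⊆ X n → IsCompact K → IsCompact (P ∩ iterComp φ n ⁻¹' K) := by
    intro K hK hKc
    have heq : P ∩ iterComp φ n ⁻¹' K
        = (dom X φ n ∩ iterComp φ n ⁻¹' K) ∩ closure P := by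
      ext z
      constructor
      · rintro ⟨hzP, hzK⟩
        exact ⟨⟨hPsub hzP, hzK⟩, subset_closure hzP⟩
      · rintro ⟨⟨hzD, hzK⟩, hzc⟩
        exact ⟨hclos z hzD hzc, hzK⟩
    rw [heq]
    exact (hproperD K hK hKc).inter_right isClosed_closure
  have hfibP : ∀ v ∈ X n, (P ∩ iterComp φ n ⁻¹' {v}).Finite ∧
      (P ∩ iterComp φ n ⁻¹' {v}).ncard ≤ ∏ k ∈ Finset.range n, d k := by
    intro v hv
    obtain ⟨hf, hc⟩ := TelescopeAux.fiber X φ n d hφ hsub v hv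
    have hsubf : P ∩ iterComp φ n ⁻¹' {v} ⊆ dom X φ n ∩ iterComp φ n ⁻¹' {v} :=
      inter_subset_inter_left _ hPsub
    exact ⟨hf.subset hsubf, (ncard_le_ncard hsubf hf).trans hc⟩
  have hsurjP : SurjOn (iterComp φ n) P (X n) := by
    have hana : AnalyticOnNhd ℂ (iterComp φ n) P := hdiffP.analyticOnNhd hPo
    rcases hana.is_constant_or_isOpen hPconn.isPreconnected with ⟨c, hc⟩ | hopen
    · exfalso
      have hcX : c ∈ X n := hc z₀ hz0P ▸ hmapsP hz0P
      have hPeq : P ∩ iterComp φ n ⁻¹' {c} = P :=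
        inter_eq_self_of_subset_left fun z hz => hc z hz
      have hPcomp : IsCompact P := by
        rw [← hPeq]
        exact hproperP {c} (singleton_subset_iff.mpr hcX) isCompact_singleton
      rcases isClopen_iff.mp ⟨hPcomp.isClosed, hPo⟩ with h | h
      · exact hPconn.nonempty.ne_empty h
      · rw [h] at hPcomp
        exact noncompact_univ ℂ hPcomp
    · have hAopen : IsOpen (iterComp φ n '' P) := hopen P subset_rfl hPo
      have hrel : X n ∩ closure (iterComp φ n '' P) ⊆ iterComp φ n '' P := by
        rintro x ⟨hxX, hxc⟩
        obtain ⟨ε, hε, hball⟩ := Metric.isOpen_iff.mp (hXo n le_rfl) x hxX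
        have hKsub : Metric.closedBall x (ε / 2) ⊆ X n :=
          (Metric.closedBall_subset_ball (by linarith)).trans hball
        have hCcomp : IsCompact (P ∩ iterComp φ n ⁻¹' Metric.closedBall x (ε / 2)) :=
          hproperP _ hKsub (isCompact_closedBall x (ε / 2))
        have hICcomp : IsCompact
            (iterComp φ n '' (P ∩ iterComp φ n ⁻¹' Metric.closedBall x (ε / 2))) :=
          hCcomp.image_of_continuousOn (hdiffP.continuousOn.mono inter_subset_left)
        have hxmem : x ∈ closure
            (iterComp φ n '' (P ∩ iterComp φ n ⁻¹' Metric.closedBall x (ε / 2))) := by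
          rw [mem_closure_iff]
          intro o ho hxo
          obtain ⟨a, ⟨hao, hab⟩, haA⟩ := mem_closure_iff.mp hxc (o ∩ Metric.ball x (ε / 2))
            (ho.inter Metric.isOpen_ball) ⟨hxo, Metric.mem_ball_self (by linarith)⟩
          obtain ⟨p, hpP, rfl⟩ := haA
          exact ⟨_, hao, ⟨p, ⟨hpP, Metric.ball_subset_closedBall hab⟩, rfl⟩⟩
        rw [hICcomp.isClosed.closure_eq] at hxmem
        exact image_mono inter_subset_left hxmem
      intro v hv
      by_contra hvA
      have hvnc : v ∉ closure (iterComp φ n '' P) := fun h => hvA (hrel ⟨hv, h⟩)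
      obtain ⟨x, hxX, hxA, hxnc⟩ := (hX n le_rfl).2.2.1 (iterComp φ n '' P)
        (closure (iterComp φ n '' P))ᶜ hAopen isClosed_closure.isOpen_compl
        (fun x hx => (em (x ∈ closure (iterComp φ n '' P))).elim
          (fun h => Or.inl (hrel ⟨hx, h⟩)) Or.inr)
        ⟨iterComp φ n z₀, hmapsP hz0P, mem_image_of_mem _ hz0P⟩
        ⟨v, hv, hvnc⟩
      exact hxnc (subset_closure hxA)
  exact ⟨hdiffP, hmapsP, hsurjP, hproperP, hfibP⟩
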